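/- (Cantor–Lebesgue) If the trigonometric series a_0/2 + \sum_{k=1}^\infty (a_k cos kx + b_k sin kx) converges at every real x, then its coefficients tend to zero: a_k \to 0 and b_k \to 0 as k \to \infty. -/

import Mathlib

open Filter Topology Finset Real MeasureTheory intervalIntegral

lemma CL.sin_nat_two_pi (k : ℕ) : Real.sin ((k:ℝ) * (2*π)) = 0 := by
  have h : (k:ℝ) * (2*π) = ((2*k : ℕ) : ℝ) * π := by push_cast; ring
  rw [h, Real.sin_nat_mul_pi]

lemma CL.cos_sq_int (k : ℕ) (hk : 1 ≤ k) :
    ∫ x in (0:ℝ)..(2*π), Real.cos ((k:ℝ)*x)^2 = π := by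
  have hk0 : (k:ℝ) ≠ 0 := Nat.cast_ne_zero.mpr (by omega)
  rw [intervalIntegral.integral_comp_mul_left (fun u => Real.cos u ^ 2) hk0]
  rw [integral_cos_sq]
  simp only [mul_assoc, CL.sin_nat_two_pi k, mul_zero, Real.sin_zero, Real.cos_zero, smul_eq_mul]
  field_simp
  ring

lemma CL.sin_sq_int (k : ℕ) (hk : 1 ≤ k) :
    ∫ x in (0:ℝ)..(2*π), Real.sin ((k:ℝ)*x)^2 = π := by
  have hk0 : (k:ℝ) ≠ 0 := Nat.cast_ne_zero.mpr (by omega)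
  rw [intervalIntegral.integral_comp_mul_left (fun u => Real.sin u ^ 2) hk0]
  rw [integral_sin_sq]
  simp only [mul_assoc, CL.sin_nat_two_pi k, mul_zero, Real.sin_zero, Real.cos_zero, smul_eq_mul]
  field_simp
  ring

lemma CL.sin_cos_int (k : ℕ) (hk : 1 ≤ k) :
    ∫ x in (0:ℝ)..(2*π), Real.sin ((k:ℝ)*x) * Real.cos ((k:ℝ)*x) = 0 := by
  have hk0 : (k:ℝ) ≠ 0 := Nat.cast_ne_zero.mpr (by omega)
  rw [intervalIntegral.integral_comp_mul_left (fun u => Real.sin u * Real.cos u) hk0]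
  rw [integral_sin_mul_cos₁]
  simp [CL.sin_nat_two_pi k]

lemma CL.key_int (k : ℕ) (hk : 1 ≤ k) (A B : ℝ) :
    ∫ x in (0:ℝ)..(2*π), (A * Real.cos ((k:ℝ)*x) + B * Real.sin ((k:ℝ)*x))^2
      = π * (A^2 + B^2) := by
  have hc : Continuous fun x : ℝ => Real.cos ((k:ℝ)*x) := by fun_prop
  have hs : Continuous fun x : ℝ => Real.sin ((k:ℝ)*x) := by fun_prop
  have e : ∀ x : ℝ, (A * Real.cos ((k:ℝ)*x) + B * Real.sin ((k:ℝ)*x))^2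
      = A^2 * Real.cos ((k:ℝ)*x)^2 + (B^2 * Real.sin ((k:ℝ)*x)^2
        + (2*A*B) * (Real.sin ((k:ℝ)*x) * Real.cos ((k:ℝ)*x))) := fun x => by ring
  simp only [e]
  rw [intervalIntegral.integral_add, intervalIntegral.integral_add,
    intervalIntegral.integral_const_mul, intervalIntegral.integral_const_mul,
    intervalIntegral.integral_const_mul, CL.cos_sq_int k hk, CL.sin_sq_int k hk,
    CL.sin_cos_int k hk]
  · ring
  · exact (continuous_const.mul (hs.pow 2)).intervalIntegrable _ _
  · exact (continuous_const.mul (hs.mul hc)).intervalIntegrable _ _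
  · exact (continuous_const.mul (hc.pow 2)).intervalIntegrable _ _
  · exact ((continuous_const.mul (hs.pow 2)).add (continuous_const.mul (hs.mul hc))).intervalIntegrable _ _

theorem cantor_lebesgue (a b : ℕ → ℝ)
    (h : ∀ x : ℝ, ∃ L : ℝ, Tendsto
      (fun n => a 0 / 2 + ∑ k ∈ Finset.Icc 1 n, (a k * Real.cos (k * x) + b k * Real.sin (k * x)))
      atTop (𝓝 L)) :
    Tendsto a atTop (𝓝 0) ∧ Tendsto b atTop (𝓝 0) := by
  -- Step 1: individual terms tend to 0 at every x
  have ht : ∀ x : ℝ, Tendsto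
      (fun k : ℕ => a k * Real.cos (k * x) + b k * Real.sin (k * x)) atTop (𝓝 0) := by
    intro x
    obtain ⟨L, hL⟩ := h x
    set S : ℕ → ℝ := fun n => a 0 / 2 +
      ∑ k ∈ Finset.Icc 1 n, (a k * Real.cos (k * x) + b k * Real.sin (k * x)) with hS
    have hshift : Tendsto (fun n => S (n + 1)) atTop (𝓝 L) :=
      hL.comp (tendsto_add_atTop_nat 1)
    have hdiff : Tendsto (fun n => S (n + 1) - S n) atTop (𝓝 0) := by
      simpa using hshift.sub hL
    have key : ∀ n : ℕ, S (n + 1) - S n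
        = a (n+1) * Real.cos ((n+1 : ℕ) * x) + b (n+1) * Real.sin ((n+1 : ℕ) * x) := by
      intro n
      simp only [hS]
      rw [Finset.sum_Icc_succ_top (by omega : 1 ≤ n + 1)]
      ring
    have h2 : Tendsto (fun n : ℕ =>
        a (n+1) * Real.cos ((n+1 : ℕ) * x) + b (n+1) * Real.sin ((n+1 : ℕ) * x))
        atTop (𝓝 0) := by
      simpa [key] using hdiff
    exact (tendsto_add_atTop_iff_nat 1).mp h2
  -- Step 2: sum of squares of coefficients tends to 0
  have hρ : Tendsto (fun k => a k ^ 2 + b k ^ 2) atTop (𝓝 0) := by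
    by_contra hcon
    rw [Metric.tendsto_atTop] at hcon
    push_neg at hcon
    obtain ⟨ε, hε, hfreq⟩ := hcon
    have hf : ∃ᶠ n in atTop, ε ≤ a n ^ 2 + b n ^ 2 := by
      rw [frequently_atTop]
      intro N
      obtain ⟨n, hn, hd⟩ := hfreq N
      refine ⟨n, hn, ?_⟩
      have hde : dist (a n ^ 2 + b n ^ 2) 0 = a n ^ 2 + b n ^ 2 := by
        rw [Real.dist_eq, sub_zero, abs_of_nonneg (by positivity)]
      rw [hde] at hd
      linarith
    obtain ⟨φ, hφ, hφε⟩ := Filter.extraction_of_frequently_atTop hf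
    set ψ : ℕ → ℕ := fun j => φ (j + 1) with hψdef
    have hψmono : StrictMono ψ := by
      intro i j hij
      exact hφ (Nat.succ_lt_succ hij)
    have hψ1 : ∀ j, 1 ≤ ψ j := fun j => le_trans (Nat.succ_le_succ (Nat.zero_le j)) (hφ.id_le (j + 1))
    have hψε : ∀ j, ε ≤ a (ψ j) ^ 2 + b (ψ j) ^ 2 := fun j => hφε (j + 1)
    have hpos : ∀ j, 0 < a (ψ j) ^ 2 + b (ψ j) ^ 2 := fun j => lt_of_lt_of_le hε (hψε j)
    set F : ℕ → ℝ → ℝ := fun j x =>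
      (a (ψ j) * Real.cos ((ψ j : ℕ) * x) + b (ψ j) * Real.sin ((ψ j : ℕ) * x)) ^ 2
        / (a (ψ j) ^ 2 + b (ψ j) ^ 2) with hFdef
    have hFcont : ∀ j, Continuous (F j) := by
      intro j; simp only [hFdef]; fun_prop
    have hFle1 : ∀ j x, F j x ≤ 1 := by
      intro j x
      rw [hFdef]
      rw [div_le_one (hpos j)]
      nlinarith [sq_nonneg (a (ψ j) * Real.sin ((ψ j : ℕ) * x) - b (ψ j) * Real.cos ((ψ j : ℕ) * x)),
        Real.sin_sq_add_cos_sq ((ψ j : ℕ) * x)]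
    have hF0 : ∀ j x, 0 ≤ F j x := fun j x => div_nonneg (sq_nonneg _) (hpos j).le
    have hDCT := intervalIntegral.tendsto_integral_filter_of_dominated_convergence
      (F := F) (f := fun _ : ℝ => (0 : ℝ)) (μ := volume) (l := atTop)
      (a := (0:ℝ)) (b := 2 * π) (fun _ : ℝ => (1 : ℝ))
      (Filter.Eventually.of_forall (fun j => (hFcont j).aestronglyMeasurable))
      (Filter.Eventually.of_forall (fun j => Filter.Eventually.of_forall (fun x _ => by
        rw [Real.norm_eq_abs, abs_of_nonneg (hF0 j x)]; exact hFle1 j x)))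
      (continuous_const.intervalIntegrable _ _)
      (Filter.Eventually.of_forall (fun x _ => ?_))
    · have hval : ∀ j, (∫ t in (0:ℝ)..(2*π), F j t) = π := by
        intro j
        simp only [hFdef]
        rw [intervalIntegral.integral_div, CL.key_int (ψ j) (hψ1 j),
          mul_div_assoc, div_self (hpos j).ne']
        ring
      have : Tendsto (fun _ : ℕ => π) atTop (𝓝 (0:ℝ)) := by
        simpa [hval] using hDCT
      exact Real.pi_ne_zero (tendsto_nhds_unique tendsto_const_nhds this)
    · -- pointwise convergence to 0
      have h1 : Tendsto (fun j => (a (ψ j) * Real.cos ((ψ j : ℕ) * x)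
          + b (ψ j) * Real.sin ((ψ j : ℕ) * x)) ^ 2) atTop (𝓝 0) := by
        have := ((ht x).comp hψmono.tendsto_atTop).pow 2
        simpa using this
      have h2 : Tendsto (fun j => (a (ψ j) * Real.cos ((ψ j : ℕ) * x)
          + b (ψ j) * Real.sin ((ψ j : ℕ) * x)) ^ 2 / ε) atTop (𝓝 0) := by
        simpa using h1.div_const ε
      refine squeeze_zero (fun j => hF0 j x) (fun j => ?_) h2
      exact div_le_div_of_nonneg_left (sq_nonneg _) hε (hψε j) |>.trans_eq rfl
  -- Step 3: conclude
  have hsqrt : Tendsto (fun k => Real.sqrt (a k ^ 2 + b k ^ 2)) atTop (𝓝 0) := by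
    have := (Real.continuous_sqrt.tendsto 0).comp hρ
    simpa [Function.comp_def] using this
  constructor
  · refine squeeze_zero_norm (fun n => ?_) hsqrt
    rw [Real.norm_eq_abs, ← Real.sqrt_sq_eq_abs]
    exact Real.sqrt_le_sqrt (by nlinarith [sq_nonneg (b n)])
  · refine squeeze_zero_norm (fun n => ?_) hsqrt
    rw [Real.norm_eq_abs, ← Real.sqrt_sq_eq_abs]
    exact Real.sqrt_le_sqrt (by nlinarith [sq_nonneg (a n)])
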